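/- Let μ be a probability measure on a measurable space Ω and denote f̄ = ∫_Ω f dμ. Let a, b : Ω → ℝ (the layer parameters c₂₃₂₃ and c₁₃₁₃) be measurable with ε ≤ a ≤ M and ε ≤ b ≤ M for some constants 0 < ε ≤ M, and suppose the layer parameter c₂₃₁₃ is identically zero, so that D := 2(a·b − 0²) = 2ab. Set D₂ := (b/D)‾ · (a/D)‾ − ((0/D)‾)². Then the Backus equivalent-medium parameters satisfy (b/D)‾ / (2·D₂) = ((1/b)‾)⁻¹ and (a/D)‾ / (2·D₂) = ((1/a)‾)⁻¹. Hence, for monoclinic layers with c₂₃₁₃ ≡ 0 (and c₃₃₁₂ ≡ 0), the Backus average and the Gazis (orthotropic) average commute. -/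

import Mathlib

open MeasureTheory

lemma aux_int_pos {Ω : Type*} [MeasurableSpace Ω] (μ : Measure Ω) [IsProbabilityMeasure μ]
    (a : Ω → ℝ) (ha : Measurable a) (ε M : ℝ) (hε : 0 < ε) (hεM : ε ≤ M)
    (ha' : ∀ ω, ε ≤ a ω ∧ a ω ≤ M) : 0 < ∫ ω, 1 / a ω ∂μ := by
  have hM : 0 < M := lt_of_lt_of_le hε hεM
  have hint : Integrable (fun ω => 1 / a ω) μ := by
    apply Integrable.mono' (g := fun _ => 1 / ε) (integrable_const _)
    · exact (ha.inv.aestronglyMeasurable.congr (by simp only [one_div]; exact Filter.EventuallyEq.rfl))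
    · refine Filter.Eventually.of_forall fun ω => ?_
      have h1 := (ha' ω).1
      have hpos : 0 < a ω := lt_of_lt_of_le hε h1
      rw [Real.norm_eq_abs, abs_of_pos (by positivity)]
      exact one_div_le_one_div_of_le hε h1
  have hle : (fun _ : Ω => 1 / M) ≤ᵐ[μ] fun ω => 1 / a ω := by
    refine Filter.Eventually.of_forall fun ω => ?_
    exact one_div_le_one_div_of_le (lt_of_lt_of_le hε (ha' ω).1) (ha' ω).2
  calc 0 < 1 / M := by positivity
    _ = ∫ _ : Ω, 1 / M ∂μ := by simp
    _ ≤ ∫ ω, 1 / a ω ∂μ := integral_mono_ae (integrable_const _) hint hle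

/-- For monoclinic layers with `c₂₃₁₃ ≡ 0` (so `D = 2(ab − 0²)`),
the Backus equivalent-medium parameters `(b/D)‾/(2D₂)` and `(a/D)‾/(2D₂)` reduce
to the harmonic means `((1/b)‾)⁻¹` and `((1/a)‾)⁻¹`; hence the Backus and Gazis
(orthotropic) averages commute in this case. -/
theorem backus_gazis_commute_of_c2313_zero
    {Ω : Type*} [MeasurableSpace Ω] (μ : Measure Ω) [IsProbabilityMeasure μ]
    (a b : Ω → ℝ) (ha : Measurable a) (hb : Measurable b)
    (ε M : ℝ) (hε : 0 < ε) (hεM : ε ≤ M)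
    (ha' : ∀ ω, ε ≤ a ω ∧ a ω ≤ M) (hb' : ∀ ω, ε ≤ b ω ∧ b ω ≤ M) :
    let D : Ω → ℝ := fun ω => 2 * (a ω * b ω - 0 ^ 2)
    let D2 : ℝ := (∫ ω, b ω / D ω ∂μ) * (∫ ω, a ω / D ω ∂μ) -
      (∫ ω, (0 : ℝ) / D ω ∂μ) ^ 2
    (∫ ω, b ω / D ω ∂μ) / (2 * D2) = (∫ ω, 1 / b ω ∂μ)⁻¹ ∧
    (∫ ω, a ω / D ω ∂μ) / (2 * D2) = (∫ ω, 1 / a ω ∂μ)⁻¹ := by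
  intro D D2
  have hapos : ∀ ω, 0 < a ω := fun ω => lt_of_lt_of_le hε (ha' ω).1
  have hbpos : ∀ ω, 0 < b ω := fun ω => lt_of_lt_of_le hε (hb' ω).1
  have h1 : ∀ ω, b ω / D ω = (1/2) * (1 / a ω) := by
    intro ω
    have := (hapos ω).ne'
    have := (hbpos ω).ne'
    simp only [D]
    field_simp
    ring
  have h2 : ∀ ω, a ω / D ω = (1/2) * (1 / b ω) := by
    intro ω
    have := (hapos ω).ne'
    have := (hbpos ω).ne'
    simp only [D]
    field_simp
    ring
  have hIa : (∫ ω, b ω / D ω ∂μ) = (1/2) * ∫ ω, 1 / a ω ∂μ := by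
    rw [show (fun ω => b ω / D ω) = fun ω => (1/2) * (1 / a ω) from funext h1,
      integral_const_mul]
  have hIb : (∫ ω, a ω / D ω ∂μ) = (1/2) * ∫ ω, 1 / b ω ∂μ := by
    rw [show (fun ω => a ω / D ω) = fun ω => (1/2) * (1 / b ω) from funext h2,
      integral_const_mul]
  have hpa : 0 < ∫ ω, 1 / a ω ∂μ := aux_int_pos μ a ha ε M hε hεM ha'
  have hpb : 0 < ∫ ω, 1 / b ω ∂μ := aux_int_pos μ b hb ε M hε hεM hb'
  have hD2 : D2 = (1/4) * ((∫ ω, 1 / a ω ∂μ) * (∫ ω, 1 / b ω ∂μ)) := by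
    simp only [D2, hIa, hIb]
    simp
    ring
  have hna := hpa.ne'
  have hnb := hpb.ne'
  constructor
  · rw [hIa, hD2, inv_eq_one_div]
    field_simp
    ring
  · rw [hIb, hD2, inv_eq_one_div]
    field_simp
    ring
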